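/- arXiv:2506.19758 — 4 statements merged into one kernel-verified Lean document; each statement's English description precedes it below -/
import Mathlib

section
/- For any finite-dimensional Lie algebra L over a field F and any x ∈ L, the subalgebra generated by x and the hypercenter Z*(L) is nilpotent. -/
/-- The hypercenter of a Lie algebra: the union (supremum) of the upper central series. -/
def hypercenter (F : Type*) [Field F] (L : Type*) [LieRing L] [LieAlgebra F L] :
    LieIdeal F L :=
  ⨆ k : ℕ, (⊥ : LieIdeal F L).ucs k

/-- `(ad y)^i` kills the `i`-th term of the upper central series. -/
lemma ad_pow_ucs_eq_zero (F : Type*) [Field F] (L : Type*) [LieRing L] [LieAlgebra F L]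
    (y : L) : ∀ (i : ℕ), ∀ v ∈ ((⊥ : LieIdeal F L).ucs i),
    ((LieAlgebra.ad F L y) ^ i) v = 0 := by
  intro i
  induction i with
  | zero =>
    intro v hv
    rw [LieSubmodule.ucs_zero, LieSubmodule.mem_bot] at hv
    simp [hv]
  | succ n ih =>
    intro v hv
    rw [LieSubmodule.ucs_succ, LieSubmodule.mem_normalizer] at hv
    rw [pow_succ, Module.End.mul_apply, LieAlgebra.ad_apply]
    exact ih _ (hv y)

theorem lieSpan_with_hypercenter_isNilpotent
    (F : Type*) [Field F] (L : Type*) [LieRing L] [LieAlgebra F L]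
    [Module.Finite F L] (x : L) :
    LieRing.IsNilpotent
      (LieSubalgebra.lieSpan F L ({x} ∪ (hypercenter F L : Set L))) := by
  haveI : IsNoetherian F L := inferInstance
  -- the upper central series stabilizes
  have mono : Monotone fun i : ℕ => (⊥ : LieIdeal F L).ucs i :=
    monotone_nat_of_le_succ fun n => by
      rw [LieSubmodule.ucs_succ]; exact LieSubmodule.le_normalizer _
  obtain ⟨k, hk⟩ :=
    wellFoundedGT_iff_monotone_chain_condition.mp (LieSubmodule.wellFoundedGT_of_noetherian F L L)
      ⟨fun i : ℕ => (⊥ : LieIdeal F L).ucs i, mono⟩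
  set Zk : LieIdeal F L := (⊥ : LieIdeal F L).ucs k with hZk
  have hyper_eq : hypercenter F L = Zk := by
    refine le_antisymm (iSup_le fun m => ?_) (le_iSup (fun i : ℕ => (⊥ : LieIdeal F L).ucs i) k)
    rcases le_total m k with h | h
    · exact mono h
    · exact le_of_eq (hk m h).symm
  -- the candidate subalgebra
  set S : Submodule F L := (Submodule.span F {x}) ⊔ (Zk : Submodule F L) with hS
  have hbr : ∀ a ∈ S, ∀ b ∈ S, ⁅a, b⁆ ∈ Zk := by
    intro a ha b hb
    rcases Submodule.mem_sup.mp ha with ⟨a1, ha1, a2, ha2, rfl⟩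
    rcases Submodule.mem_sup.mp hb with ⟨b1, hb1, b2, hb2, rfl⟩
    obtain ⟨s, rfl⟩ := Submodule.mem_span_singleton.mp ha1
    obtain ⟨t, rfl⟩ := Submodule.mem_span_singleton.mp hb1
    have key : ⁅s • x + a2, t • x + b2⁆ =
        s • ⁅x, b2⁆ + (-(t • ⁅x, a2⁆) + ⁅a2, b2⁆) := by
      simp only [add_lie, lie_add, smul_lie, lie_smul, lie_self, smul_zero, zero_add]
      rw [show ⁅a2, x⁆ = -⁅x, a2⁆ from (lie_skew a2 x).symm]
      module
    rw [key]
    exact Zk.add_mem (Zk.smul_mem s (Zk.lie_mem hb2))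
      (Zk.add_mem (Zk.neg_mem (Zk.smul_mem t (Zk.lie_mem ha2))) (Zk.lie_mem hb2))
  let K' : LieSubalgebra F L :=
    { S with lie_mem' := fun {a b} ha hb => Submodule.mem_sup_right (hbr a ha b hb) }
  have hKle : LieSubalgebra.lieSpan F L ({x} ∪ (hypercenter F L : Set L)) ≤ K' := by
    rw [LieSubalgebra.lieSpan_le]
    rintro y (rfl | hy)
    · exact Submodule.mem_sup_left (Submodule.mem_span_singleton_self _)
    · exact Submodule.mem_sup_right (by rwa [← hyper_eq])
  set K := LieSubalgebra.lieSpan F L ({x} ∪ (hypercenter F L : Set L)) with hK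
  haveI : IsNoetherian F K :=
    isNoetherian_of_injective (K : Submodule F L).subtype (Submodule.injective_subtype _)
  rw [LieAlgebra.isNilpotent_iff_forall (R := F)]
  intro y
  refine ⟨k + 1, ?_⟩
  have coe_pow : ∀ n : ℕ, ∀ w : K, ((((LieAlgebra.ad F K y) ^ n) w : K) : L) =
      ((LieAlgebra.ad F L (y : L)) ^ n) (w : L) := by
    intro n
    induction n with
    | zero => intro w; simp
    | succ n ih =>
      intro w
      rw [pow_succ, pow_succ, Module.End.mul_apply, Module.End.mul_apply,
        LieAlgebra.ad_apply, LieAlgebra.ad_apply, ih]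
      rfl
  ext w
  rw [LinearMap.zero_apply, ZeroMemClass.coe_zero, coe_pow]
  have hy : (y : L) ∈ S := hKle y.2
  have hw : (w : L) ∈ S := hKle w.2
  rw [pow_succ, Module.End.mul_apply, LieAlgebra.ad_apply]
  exact ad_pow_ucs_eq_zero F L (y : L) k _ (hbr _ hy _ hw)
end

section
/- If L is a finite-dimensional Lie algebra over a field of characteristic zero, then the hypercenter Z*(L) equals the nilpotentizer nil(L). -/
/-- The nilpotentizer of a Lie algebra `L`. -/
def nilSet (F : Type*) [Field F] (L : Type*) [LieRing L] [LieAlgebra F L] : Set L :=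
  {x : L | ∀ h : L, LieRing.IsNilpotent (LieSubalgebra.lieSpan F L {x, h})}

set_option linter.unusedSectionVars false

open LieAlgebra Module Finset

section Core

variable (F : Type*) [Field F] (L : Type*) [LieRing L] [LieAlgebra F L]

/-- Words in two letters arising as coefficients of `(T + t W)^N`. -/
noncomputable def sword (T W : Module.End F L) : ℕ → ℕ → Module.End F L
  | 0, 0 => 1
  | 0, _+1 => 0
  | N+1, 0 => sword T W N 0 * T
  | N+1, k+1 => sword T W N (k+1) * T + sword T W N k * W

variable {F L}

lemma sword_eq_zero_of_lt (T W : Module.End F L) {N k : ℕ} (h : N < k) :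
    sword F L T W N k = 0 := by
  induction N generalizing k with
  | zero => obtain ⟨k, rfl⟩ : ∃ m, k = m + 1 := ⟨k - 1, by omega⟩; rfl
  | succ N ih =>
    obtain ⟨k, rfl⟩ : ∃ m, k = m + 1 := ⟨k - 1, by omega⟩
    show sword F L T W N (k+1) * T + sword F L T W N k * W = 0
    rw [ih (by omega), ih (by omega), zero_mul, zero_mul, add_zero]

lemma sword_expand (T W : Module.End F L) (t : F) (N : ℕ) :
    (T + t • W) ^ N = ∑ k ∈ range (N + 1), t ^ k • sword F L T W N k := by
  induction N with
  | zero => simp [sword]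
  | succ N ih =>
    rw [pow_succ, ih, Finset.sum_mul]
    have h1 : ∀ k, (t ^ k • sword F L T W N k) * (T + t • W)
        = t ^ k • (sword F L T W N k * T) + t ^ (k+1) • (sword F L T W N k * W) := by
      intro k
      rw [mul_add, smul_mul_assoc, smul_mul_assoc, Algebra.mul_smul_comm, smul_smul,
        pow_succ, mul_comm (t ^ k) t, mul_comm t (t ^ k)]
    simp_rw [h1, Finset.sum_add_distrib]
    have e0 : ∀ k, sword F L T W (N+1) (k+1)
        = sword F L T W N (k+1) * T + sword F L T W N k * W := fun _ => rfl
    have e1 : sword F L T W (N+1) 0 = sword F L T W N 0 * T := rfl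
    conv_rhs => rw [Finset.sum_range_succ']
    simp_rw [e0, e1, smul_add, Finset.sum_add_distrib, pow_zero, one_smul]
    have hz : sword F L T W N (N+1) = 0 := sword_eq_zero_of_lt T W (by omega)
    rw [Finset.sum_range_succ (fun x => t ^ (x+1) • (sword F L T W N (x+1) * T)) N]
    rw [hz, zero_mul, smul_zero, add_zero]
    rw [Finset.sum_range_succ' (fun x => t ^ x • (sword F L T W N x * T)) N]
    rw [pow_zero, one_smul]
    abel

lemma sword_zero_eq (T W : Module.End F L) (N : ℕ) : sword F L T W N 0 = T ^ N := by
  induction N with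
  | zero => rfl
  | succ N ih => show sword F L T W N 0 * T = _; rw [ih, pow_succ]

lemma sword_one_eq (T W : Module.End F L) (N : ℕ) :
    sword F L T W N 1 = ∑ j ∈ range N, T ^ j * W * T ^ (N - 1 - j) := by
  induction N with
  | zero => rfl
  | succ N ih =>
    show sword F L T W N 1 * T + sword F L T W N 0 * W = _
    rw [ih, sword_zero_eq, Finset.sum_mul, Finset.sum_range_succ]
    congr 1
    · apply Finset.sum_congr rfl
      intro j hj
      rw [Finset.mem_range] at hj
      rw [mul_assoc, mul_assoc, ← pow_succ]
      have : N - 1 - j + 1 = N - j := by omega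
      rw [this]
      have : N + 1 - 1 - j = N - j := by omega
      rw [this, mul_assoc]
    · have : N + 1 - 1 - N = 0 := by omega
      rw [this, pow_zero, mul_one]

end Core

section Key

variable {F : Type*} [Field F] [Infinite F] {L : Type*} [LieRing L] [LieAlgebra F L]
  [Module.Finite F L]

lemma coeff_zero_of_forall_sum_eq_zero {N : ℕ} (c : ℕ → L)
    (h : ∀ t : F, ∑ k ∈ range N, t ^ k • c k = 0) : ∀ k, k < N → c k = 0 := by
  intro k hk
  rw [← Module.forall_dual_apply_eq_zero_iff F]
  intro φ
  have hp : (∑ j ∈ range N, Polynomial.C (φ (c j)) * Polynomial.X ^ j : Polynomial F) = 0 := by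
    apply Polynomial.funext
    intro t
    rw [Polynomial.eval_finset_sum]
    simp only [Polynomial.eval_mul, Polynomial.eval_C, Polynomial.eval_pow, Polynomial.eval_X,
      Polynomial.eval_zero]
    have := congrArg φ (h t)
    rw [map_sum, map_zero] at this
    simpa [mul_comm] using this
  have h2 := congrArg (fun p : Polynomial F => p.coeff k) hp
  simp only [Polynomial.finset_sum_coeff, Polynomial.coeff_C_mul, Polynomial.coeff_X_pow,
    Polynomial.coeff_zero, mul_ite, mul_one, mul_zero] at h2
  rwa [Finset.sum_ite_eq (range N) k (fun j => φ (c j)), if_pos (Finset.mem_range.mpr hk)] at h2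

lemma rel_of_fitting {v : L} (hv : ∀ w : L, ((ad F L w) ^ (finrank F L)) v = 0)
    (w u : L) {N : ℕ} (hN : finrank F L ≤ N) (hN0 : 0 < N) :
    ∑ j ∈ range N, ((ad F L w) ^ j * (ad F L u) * (ad F L w) ^ (N - 1 - j)) v = 0 := by
  have h0 : ∀ t : F, ((ad F L w + t • ad F L u) ^ N) v = 0 := by
    intro t
    have he : ad F L w + t • ad F L u = ad F L (w + t • u) := by
      rw [map_add, map_smul]
    rw [he]
    obtain ⟨m, rfl⟩ := Nat.exists_eq_add_of_le hN
    rw [add_comm (finrank F L) m, pow_add, Module.End.mul_apply, hv (w + t • u), map_zero]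
  have hsum : ∀ t : F,
      ∑ k ∈ range (N + 1), t ^ k • (sword F L (ad F L w) (ad F L u) N k) v = 0 := by
    intro t
    have h3 := congrArg (fun f : Module.End F L => f v)
      (sword_expand (ad F L w) (ad F L u) t N)
    simpa only [LinearMap.sum_apply, LinearMap.smul_apply, h0 t] using h3.symm
  have h1 := coeff_zero_of_forall_sum_eq_zero
    (fun k => (sword F L (ad F L w) (ad F L u) N k) v) hsum 1 (by omega)
  have h1' : (sword F L (ad F L w) (ad F L u) N 1) v = 0 := h1
  rw [sword_one_eq] at h1'
  simpa only [LinearMap.sum_apply] using h1'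

lemma key_lie_mem {v : L} (hv : ∀ w : L, ((ad F L w) ^ (finrank F L)) v = 0) (g w : L) :
    ((ad F L w) ^ (finrank F L)) ⁅g, v⁆ = 0 := by
  have hTv : ((ad F L w) ^ (finrank F L + 1)) v = 0 := by
    rw [pow_succ', Module.End.mul_apply, hv w, map_zero]
  have hbr : ad F L ⁅w, g⁆ = ad F L w * ad F L g - ad F L g * ad F L w := by
    letI := LieRing.ofAssociativeRing (A := Module.End F L)
    rw [LieHom.map_lie, Ring.lie_def]
  have R1 := rel_of_fitting hv w ⁅w, g⁆ (show finrank F L ≤ finrank F L + 1 by omega) (by omega)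
  rw [hbr] at R1
  have hterm : ∀ j ∈ range (finrank F L + 1),
      ((ad F L w) ^ j * (ad F L w * ad F L g - ad F L g * ad F L w)
          * (ad F L w) ^ (finrank F L + 1 - 1 - j)) v
        = (fun i => ((ad F L w) ^ i) (ad F L g (((ad F L w) ^ (finrank F L + 1 - i)) v))) (j+1)
          - (fun i => ((ad F L w) ^ i) (ad F L g (((ad F L w) ^ (finrank F L + 1 - i)) v))) j := by
    intro j hj
    rw [Finset.mem_range] at hj
    simp only []
    have e1 : finrank F L + 1 - 1 - j = finrank F L - j := by omega
    have e2 : finrank F L + 1 - (j + 1) = finrank F L - j := by omega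
    have e3 : finrank F L + 1 - j = finrank F L - j + 1 := by omega
    rw [e1, e2, e3]
    simp only [Module.End.mul_apply, LinearMap.sub_apply, map_sub]
    have haux1 : ∀ x : L, ((ad F L w) ^ (j+1)) x = ((ad F L w) ^ j) (ad F L w x) := by
      intro x; rw [pow_succ, Module.End.mul_apply]
    have haux2 : ∀ x : L, ((ad F L w) ^ (finrank F L - j + 1)) x
        = ad F L w (((ad F L w) ^ (finrank F L - j)) x) := by
      intro x; rw [pow_succ', Module.End.mul_apply]
    rw [haux1, haux2]
  rw [Finset.sum_congr rfl hterm, Finset.sum_range_sub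
    (fun i => ((ad F L w) ^ i) (ad F L g (((ad F L w) ^ (finrank F L + 1 - i)) v)))] at R1
  simp only [Nat.sub_self, pow_zero, Module.End.one_apply, Nat.sub_zero, hTv, map_zero] at R1
  rw [sub_zero] at R1
  -- R1 : (ad w)^(r+1) ((ad g) v) = 0
  have hker := Module.End.ker_pow_le_ker_pow_finrank (ad F L w) (finrank F L + 1)
  have hmem : ad F L g v ∈ LinearMap.ker ((ad F L w) ^ (finrank F L + 1)) :=
    LinearMap.mem_ker.mpr R1
  have h4 := LinearMap.mem_ker.mp (hker hmem)
  simpa only [ad_apply] using h4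

end Key

section Main

variable (F : Type*) [Field F] [Infinite F] (L : Type*) [LieRing L] [LieAlgebra F L]
  [Module.Finite F L]

/-- The intersection of the Fitting null-components of all inner derivations, as a Lie ideal. -/
noncomputable def fittingCore : LieIdeal F L where
  carrier := {v : L | ∀ w : L, ((ad F L w) ^ (finrank F L)) v = 0}
  add_mem' := fun {a b} ha hb w => by rw [map_add, ha w, hb w, add_zero]
  zero_mem' := fun w => map_zero _
  smul_mem' := fun t {v} hv w => by rw [map_smul, hv w, smul_zero]
  lie_mem := fun {g v} hv w => key_lie_mem hv g w

variable {F L}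

lemma mem_fittingCore_iff {v : L} :
    v ∈ fittingCore F L ↔ ∀ w : L, ((ad F L w) ^ (finrank F L)) v = 0 := Iff.rfl

lemma mem_fittingCore_of_pow {v : L} (h : ∀ w : L, ∃ n : ℕ, ((ad F L w) ^ n) v = 0) :
    v ∈ fittingCore F L := by
  intro w
  obtain ⟨n, hn⟩ := h w
  exact LinearMap.mem_ker.mp
    (Module.End.ker_pow_le_ker_pow_finrank (ad F L w) n (LinearMap.mem_ker.mpr hn))

lemma pow_ad_eq_zero_of_mem_ucs {k : ℕ} {x : L}
    (hx : x ∈ (⊥ : LieIdeal F L).ucs k) (w : L) : ((ad F L w) ^ k) x = 0 := by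
  induction k generalizing x with
  | zero =>
    rw [LieSubmodule.ucs_zero, LieSubmodule.mem_bot] at hx
    rw [hx, pow_zero, Module.End.one_apply]
  | succ k ih =>
    rw [LieSubmodule.ucs_succ, LieSubmodule.mem_normalizer] at hx
    rw [pow_succ, Module.End.mul_apply]
    exact ih (hx w)

lemma hypercenter_le_fittingCore : hypercenter F L ≤ fittingCore F L := by
  refine iSup_le fun k x hx => ?_
  exact mem_fittingCore_of_pow (fun w => ⟨k, pow_ad_eq_zero_of_mem_ucs hx w⟩)

lemma fittingCore_le_hypercenter : fittingCore F L ≤ hypercenter F L := by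
  have hnil : LieModule.IsNilpotent L (fittingCore F L) := by
    rw [LieModule.isNilpotent_iff_forall (R := F)]
    intro y
    refine ⟨finrank F L, ?_⟩
    ext c
    have hc := LieSubmodule.coe_toEnd_pow F L L (fittingCore F L) y c (finrank F L)
    simp only [LinearMap.zero_apply]
    show _ = ((0 : fittingCore F L) : L)
    rw [hc, ZeroMemClass.coe_zero]
    exact c.2 y
  obtain ⟨k, hk⟩ := (LieSubmodule.isNilpotent_iff_exists_self_le_ucs (fittingCore F L)).mp hnil
  exact hk.trans (le_iSup (fun k => (⊥ : LieIdeal F L).ucs k) k)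

lemma fittingCore_subset_nilSet : (fittingCore F L : Set L) ⊆ nilSet F L := by
  intro x hx h
  -- the enveloping subalgebra `M = fittingCore ⊔ F h`
  have hlie : ∀ a ∈ (fittingCore F L : Submodule F L) ⊔ (F ∙ h),
      ∀ b ∈ (fittingCore F L : Submodule F L) ⊔ (F ∙ h), ⁅a, b⁆ ∈ fittingCore F L := by
    intro a ha b hb
    obtain ⟨c, hc, z, hz, rfl⟩ := Submodule.mem_sup.mp hb
    obtain ⟨t, rfl⟩ := Submodule.mem_span_singleton.mp hz
    obtain ⟨c', hc', z', hz', rfl⟩ := Submodule.mem_sup.mp ha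
    obtain ⟨t', rfl⟩ := Submodule.mem_span_singleton.mp hz'
    have h1 : ⁅c' + t' • h, c⁆ ∈ fittingCore F L := (fittingCore F L).lie_mem hc
    have h2 : ⁅c' + t' • h, t • h⁆ ∈ fittingCore F L := by
      rw [add_lie, smul_lie, lie_smul, lie_smul, lie_self, smul_zero, smul_zero, add_zero]
      have : ⁅h, c'⁆ ∈ fittingCore F L := (fittingCore F L).lie_mem hc'
      have hneg : ⁅c', h⁆ ∈ fittingCore F L := by
        rw [← lie_skew]
        exact neg_mem this
      exact Submodule.smul_mem _ t hneg
    simpa [lie_add] using add_mem h1 h2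
  set M : LieSubalgebra F L :=
    { toSubmodule := (fittingCore F L : Submodule F L) ⊔ (F ∙ h)
      lie_mem' := fun {a b} ha hb => le_sup_left (α := Submodule F L) (hlie a ha b hb) } with hM
  have hxM : x ∈ M := le_sup_left (α := Submodule F L) hx
  have hhM : h ∈ M := le_sup_right (α := Submodule F L) (Submodule.mem_span_singleton_self h)
  have hS : LieSubalgebra.lieSpan F L {x, h} ≤ M := by
    rw [LieSubalgebra.lieSpan_le]
    rintro y (rfl | rfl)
    exacts [hxM, hhM]
  rw [LieAlgebra.isNilpotent_iff_forall (R := F)]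
  intro u
  refine ⟨finrank F L + 1, ?_⟩
  ext s
  simp only [LinearMap.zero_apply]
  have hcoe := LieSubalgebra.coe_ad_pow F L (LieSubalgebra.lieSpan F L {x, h})
    u s (finrank F L + 1)
  show _ = ((0 : LieSubalgebra.lieSpan F L {x, h}) : L)
  rw [hcoe, ZeroMemClass.coe_zero]
  have hbr : ⁅(u : L), (s : L)⁆ ∈ fittingCore F L :=
    hlie u (hS u.2) s (hS s.2)
  rw [pow_succ, Module.End.mul_apply]
  exact hbr u

lemma nilSet_subset_fittingCore : nilSet F L ⊆ (fittingCore F L : Set L) := by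
  intro x hx
  apply mem_fittingCore_of_pow
  intro w
  have hnil := hx w
  have hxS : x ∈ LieSubalgebra.lieSpan F L {x, w} :=
    LieSubalgebra.subset_lieSpan (by simp)
  have hwS : w ∈ LieSubalgebra.lieSpan F L {x, w} :=
    LieSubalgebra.subset_lieSpan (by simp)
  obtain ⟨n, hn⟩ := (LieAlgebra.isNilpotent_iff_forall (R := F)).mp hnil ⟨w, hwS⟩
  refine ⟨n, ?_⟩
  have := congrArg (fun f => f ⟨x, hxS⟩) hn
  simp only [LinearMap.zero_apply] at this
  have hcoe := LieSubalgebra.coe_ad_pow F L (LieSubalgebra.lieSpan F L {x, w})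
    ⟨w, hwS⟩ ⟨x, hxS⟩ n
  rw [this] at hcoe
  rw [← hcoe, ZeroMemClass.coe_zero]

end Main

theorem hypercenter_eq_nilSet_of_charZero
    (F : Type*) [Field F] [CharZero F] (L : Type*) [LieRing L] [LieAlgebra F L]
    [Module.Finite F L] :
    (hypercenter F L : Set L) = nilSet F L := by
  have heq : hypercenter F L = fittingCore F L :=
    le_antisymm hypercenter_le_fittingCore fittingCore_le_hypercenter
  rw [heq]
  exact le_antisymm (fittingCore_subset_nilSet) (nilSet_subset_fittingCore)
end

section
/- If L is a completely solvable finite-dimensional Lie algebra (i.e. [L,L] is nilpotent) over any field, then nil(L) is contained in the nilradical N(L). -/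
open LieAlgebra LieModule

/-- `ad` on a Lie ideal is compatible with `ad` on the ambient algebra. -/
lemma lieIdeal_coe_ad_pow {F : Type*} [Field F] {L : Type*} [LieRing L] [LieAlgebra F L]
    (I : LieIdeal F L) (y z : I) (q : ℕ) :
    (((ad F I y) ^ q) z : L) = ((ad F L (y : L)) ^ q) (z : L) := by
  induction q generalizing z with
  | zero => rfl
  | succ q ih =>
    have e1 : ((ad F I y) ^ (q + 1)) z = ((ad F I y) ^ q) (ad F I y z) := by
      rw [pow_succ, Module.End.mul_apply]
    have e2 : ((ad F L (y : L)) ^ (q + 1)) (z : L)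
        = ((ad F L (y : L)) ^ q) (ad F L (y : L) (z : L)) := by
      rw [pow_succ, Module.End.mul_apply]
    rw [e1, e2, ih]
    congr 1

/-- An endomorphism `g + h` is nilpotent if there is a finite descending chain of submodules
starting at `⊤` and ending at `⊥`, preserved by `g`, strictly shifted by `h`,
with `g` nilpotent. -/
lemma aux_end_nilpotent {F : Type*} [Field F] {V : Type*} [AddCommGroup V] [Module F V]
    (g h : Module.End F V) (C : ℕ → Submodule F V)
    (hC0 : C 0 = ⊤) (hmono : ∀ i, C (i + 1) ≤ C i)
    (hg : ∀ i, ∀ v ∈ C i, g v ∈ C i)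
    (hh : ∀ i, ∀ v ∈ C i, h v ∈ C (i + 1))
    (hgn : ∃ r, g ^ r = 0) (hbot : ∃ m, C m = ⊥) :
    IsNilpotent (g + h) := by
  obtain ⟨r, hr⟩ := hgn
  obtain ⟨m, hm⟩ := hbot
  set f := g + h with hf
  have hfC : ∀ i, ∀ v ∈ C i, f v ∈ C i := by
    intro i v hv
    have : f v = g v + h v := rfl
    rw [this]
    exact add_mem (hg i v hv) (hmono i (hh i v hv))
  have hgpow : ∀ i (v : V), v ∈ C i → ∀ j, (g ^ j) v ∈ C i := by
    intro i v hv j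
    induction j with
    | zero => simpa using hv
    | succ j ih =>
      rw [pow_succ', Module.End.mul_apply]
      exact hg i _ ih
  have key : ∀ i (v : V), v ∈ C i → ∀ j, (f ^ j) v - (g ^ j) v ∈ C (i + 1) := by
    intro i v hv j
    induction j with
    | zero => simp
    | succ j ih =>
      have h1 : (f ^ (j + 1)) v - (g ^ (j + 1)) v
          = f ((f ^ j) v - (g ^ j) v) + h ((g ^ j) v) := by
        have e1 : (f ^ (j + 1)) v = f ((f ^ j) v) := by
          rw [pow_succ', Module.End.mul_apply]
        have e2 : (g ^ (j + 1)) v = g ((g ^ j) v) := by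
          rw [pow_succ', Module.End.mul_apply]
        have e3 : f ((g ^ j) v) = g ((g ^ j) v) + h ((g ^ j) v) := rfl
        rw [e1, e2, map_sub, e3]
        abel
      rw [h1]
      exact add_mem (hfC (i + 1) _ ih) (hh i _ (hgpow i v hv j))
  have step : ∀ i, ∀ v ∈ C i, (f ^ r) v ∈ C (i + 1) := by
    intro i v hv
    have h2 := key i v hv r
    rw [hr] at h2
    simpa using h2
  have main : ∀ i (v : V), (f ^ (r * i)) v ∈ C i := by
    intro i
    induction i with
    | zero =>
      intro v
      rw [hC0]
      trivial
    | succ i ih =>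
      intro v
      have e : f ^ (r * (i + 1)) = f ^ r * f ^ (r * i) := by
        rw [← pow_add]
        ring_nf
      rw [e, Module.End.mul_apply]
      exact step i _ (ih v)
  refine ⟨r * m, ?_⟩
  ext v
  have := main m v
  rw [hm] at this
  simpa using this

theorem nilSet_subset_nilradical_of_completelySolvable
    (F : Type*) [Field F] (L : Type*) [LieRing L] [LieAlgebra F L]
    [Module.Finite F L]
    -- `L` is completely solvable: its derived algebra `[L,L]` is nilpotent
    (hcs : LieRing.IsNilpotent (⁅(⊤ : LieIdeal F L), (⊤ : LieIdeal F L)⁆ : LieIdeal F L))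
    -- `N` is the nilradical: the largest nilpotent ideal of `L`
    (N : LieIdeal F L) (hN : LieRing.IsNilpotent N)
    (hmax : ∀ I : LieIdeal F L, LieRing.IsNilpotent I → I ≤ N) :
    nilSet F L ⊆ (N : Set L) := by
  intro x hx
  -- every bracket lies in N
  have hder : ∀ a b : L, ⁅a, b⁆ ∈ N := fun a b =>
    hmax _ hcs (LieSubmodule.lie_mem_lie (LieSubmodule.mem_top _)
      (LieSubmodule.mem_top _))
  -- Step A: ad x is nilpotent, pointwise
  have hadx : ∀ h : L, ∃ k, ((ad F L x) ^ k) h = 0 := by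
    intro h
    set S := LieSubalgebra.lieSpan F L {x, h} with hS
    haveI : LieRing.IsNilpotent S := hx h
    have hxS : x ∈ S := LieSubalgebra.subset_lieSpan (by simp)
    have hhS : h ∈ S := LieSubalgebra.subset_lieSpan (by simp)
    obtain ⟨k, hk⟩ := LieModule.isNilpotent_toEnd_of_isNilpotent F S S ⟨x, hxS⟩
    refine ⟨k, ?_⟩
    have hk' : (ad F S (⟨x, hxS⟩ : S)) ^ k = 0 := hk
    have h2 := LieSubalgebra.coe_ad_pow F L S ⟨x, hxS⟩ ⟨h, hhS⟩ k
    rw [hk'] at h2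
    simpa using h2.symm
  -- uniform nilpotency of ad x
  obtain ⟨s, hs⟩ := Module.Finite.fg_top (R := F) (M := L)
  choose kf hkf using hadx
  set K := s.sup kf with hKdef
  have hK : (ad F L x) ^ K = 0 := by
    have hsub : (s : Set L) ⊆ ↑(LinearMap.ker ((ad F L x) ^ K)) := by
      intro v hv
      simp only [SetLike.mem_coe, LinearMap.mem_ker]
      have h1 : K = (K - kf v) + kf v := (Nat.sub_add_cancel (Finset.le_sup hv)).symm
      rw [h1, pow_add, Module.End.mul_apply, hkf v, map_zero]
    have hker : LinearMap.ker ((ad F L x) ^ K) = ⊤ :=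
      top_unique (hs ▸ Submodule.span_le.mpr hsub)
    exact LinearMap.ker_eq_top.mp hker
  -- the chain N.lcs L terminates
  obtain ⟨m0, hm0⟩ := (LieModule.isNilpotent_iff F N N).mp hN
  have hchain : ∀ k, ∀ v ∈ N.lcs L (k + 1),
      v ∈ Submodule.map (N : Submodule F L).subtype
        (lowerCentralSeries F N N k : Submodule F N) := by
    intro k
    induction k with
    | zero =>
      intro v hv
      have hvN : v ∈ N := by
        have hle : N.lcs L 1 ≤ (N : LieSubmodule F L L) := by
          rw [LieIdeal.lcs_succ, LieIdeal.lcs_zero]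
          exact LieSubmodule.lie_le_left N ⊤
        exact hle hv
      exact ⟨⟨v, hvN⟩, by simp; exact trivial, rfl⟩
    | succ k ih =>
      intro v hv
      rw [LieIdeal.lcs_succ] at hv
      have hv' : v ∈ Submodule.span F {m | ∃ y ∈ N, ∃ n ∈ N.lcs L (k + 1), ⁅y, n⁆ = m} := by
        rw [← LieSubmodule.lieIdeal_oper_eq_linear_span']
        exact hv
      refine Submodule.span_le.mpr ?_ hv'
      rintro w ⟨y, hy, n, hn, rfl⟩
      obtain ⟨n', hn'lcs, rfl⟩ := ih n hn
      refine ⟨(⁅(⟨y, hy⟩ : N), (show N from n')⁆ : N), ?_, rfl⟩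
      have hmem : ⁅(⟨y, hy⟩ : N), (show N from n')⁆ ∈ LieModule.lowerCentralSeries F N N (k + 1) := by
        rw [LieModule.lowerCentralSeries_succ]
        exact LieSubmodule.lie_mem_lie (LieSubmodule.mem_top _)
          (show n' ∈ LieModule.lowerCentralSeries F N N k from hn'lcs)
      exact hmem
  have hbot : ∀ v ∈ N.lcs L (m0 + 1), v = (0 : L) := by
    intro v hv
    have := hchain m0 v hv
    rw [hm0] at this
    simpa using this
  -- The ideal J = N + F∙x
  let Jsub : Submodule F L := (N : Submodule F L) ⊔ (F ∙ x)
  let J : LieIdeal F L :=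
    { toSubmodule := Jsub
      lie_mem := fun {y m} _ => Submodule.mem_sup_left (hder y m) }
  have hxJ : x ∈ J :=
    Submodule.mem_sup_right (Submodule.mem_span_singleton_self x)
  -- every element of Jsub has nilpotent adjoint action on L
  have hadJ : ∀ y ∈ Jsub, ∃ q, (ad F L y) ^ q = 0 := by
    intro y hy
    obtain ⟨n, hn, z, hz, rfl⟩ := Submodule.mem_sup.mp hy
    obtain ⟨c, rfl⟩ := Submodule.mem_span_singleton.mp hz
    have hnil : IsNilpotent (c • ad F L x + ad F L n) := by
      apply aux_end_nilpotent (c • ad F L x) (ad F L n)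
        (fun i => (N.lcs L i : Submodule F L))
      · simp
      · intro i
        intro v hv
        rw [LieIdeal.lcs_succ] at hv
        exact LieSubmodule.lie_le_right _ _ hv
      · intro i v hv
        have : (c • ad F L x) v = c • ⁅x, v⁆ := rfl
        rw [this]
        exact Submodule.smul_mem _ c ((N.lcs L i).lie_mem hv)
      · intro i v hv
        have : (ad F L n) v = ⁅n, v⁆ := rfl
        rw [this, LieIdeal.lcs_succ]
        exact LieSubmodule.lie_mem_lie hn hv
      · exact ⟨K, by rw [smul_pow, hK, smul_zero]⟩
      · exact ⟨m0 + 1, by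
          rw [eq_bot_iff]
          intro v hv
          simpa using hbot v hv⟩
    have heq : ad F L (n + c • x) = c • ad F L x + ad F L n := by
      rw [map_add, map_smul, add_comm]
    obtain ⟨q, hq⟩ := hnil
    exact ⟨q, by rw [heq, hq]⟩
  -- J is a nilpotent Lie algebra, by Engel's theorem
  have hJnil : LieRing.IsNilpotent J := by
    rw [LieAlgebra.isNilpotent_iff_forall (R := F)]
    intro y
    obtain ⟨q, hq⟩ := hadJ y.val y.property
    refine ⟨q, ?_⟩
    ext z
    simp only [LinearMap.zero_apply]
    have h2 := lieIdeal_coe_ad_pow J y z q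
    rw [hq, LinearMap.zero_apply] at h2
    rw [ZeroMemClass.coe_zero]
    exact h2
  exact hmax J hJnil hxJ
end

section
/- In the Lie algebra L = t(2, F_q) of 2×2 upper triangular matrices over a finite field F_q, if x is not a scalar matrix then nil_L(x) = F_q·x + F_q·I is a two-dimensional abelian subalgebra of L. -/
attribute [local instance 100] LieRing.ofAssociativeRing

/-- The Lie algebra `t(2,F)` of upper triangular `2 × 2` matrices over `F`,
as a Lie subalgebra of the matrix Lie algebra. -/
def t2 (F : Type*) [Field F] : LieSubalgebra F (Matrix (Fin 2) (Fin 2) F) where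
  carrier := {A | A 1 0 = 0}
  add_mem' := by intro a b ha hb; simp_all [Set.mem_setOf_eq, Matrix.add_apply]
  zero_mem' := by simp
  smul_mem' := by intro c a ha; simp_all [Set.mem_setOf_eq, Matrix.smul_apply]
  lie_mem' := by
    intro a b ha hb
    simp_all [Set.mem_setOf_eq, Ring.lie_def, Matrix.sub_apply, Matrix.mul_apply,
      Fin.sum_univ_two]

/-- The identity matrix as an element of `t(2,F)`. -/
def t2Id (F : Type*) [Field F] : (t2 F) :=
  ⟨1, by show (1 : Matrix (Fin 2) (Fin 2) F) 1 0 = 0; simp [Matrix.one_apply]⟩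

/-- The nilpotentizer of an element `h` of a Lie algebra `L`: the set of `x ∈ L` such
that the Lie subalgebra generated by `h` and `x` is nilpotent. -/
def nilIn (F : Type*) [Field F] (L : Type*) [LieRing L] [LieAlgebra F L] (h : L) : Set L :=
  {x : L | LieRing.IsNilpotent (LieSubalgebra.lieSpan F L {h, x})}

namespace T2Aux

variable {F : Type*} [Field F]

def e12 : t2 F := ⟨!![0,1;0,0], by show (!![0,1;0,0] : Matrix (Fin 2) (Fin 2) F) 1 0 = 0; simp⟩

noncomputable def dd (u : t2 F) : F :=
  (u : Matrix (Fin 2) (Fin 2) F) 0 0 - (u : Matrix (Fin 2) (Fin 2) F) 1 1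

noncomputable def oo (u : t2 F) : F := (u : Matrix (Fin 2) (Fin 2) F) 0 1

lemma mem10 (u : t2 F) : (u : Matrix (Fin 2) (Fin 2) F) 1 0 = 0 := u.2

lemma lie_eq (y z : t2 F) : ⁅y, z⁆ = (dd y * oo z - dd z * oo y) • (e12 : t2 F) := by
  apply Subtype.ext
  rw [LieSubalgebra.coe_bracket]
  show _ = (dd y * oo z - dd z * oo y) • (e12 : t2 F).1
  ext i j
  fin_cases i <;> fin_cases j <;>
    simp [dd, oo, e12, Ring.lie_def, Matrix.mul_apply, Fin.sum_univ_two, mem10] <;> ring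

lemma e12_ne : (e12 : t2 F) ≠ 0 := by
  intro h
  have := congrArg (fun u : t2 F => (u : Matrix (Fin 2) (Fin 2) F) 0 1) h
  simp [e12] at this

lemma dd_id : dd (t2Id F) = 0 := by simp [dd, t2Id, Matrix.one_apply]
lemma oo_id : oo (t2Id F) = 0 := by simp [oo, t2Id, Matrix.one_apply]
lemma oo_e12 : oo (e12 : t2 F) = 1 := by simp [oo, e12]
lemma dd_e12 : dd (e12 : t2 F) = 0 := by simp [dd, e12]

end T2Aux

namespace T2Aux
variable {F : Type*} [Field F]

lemma coe_smul_add (a b : F) (u v : t2 F) :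
    ((a • u + b • v : t2 F) : Matrix (Fin 2) (Fin 2) F) = a • (u : Matrix (Fin 2) (Fin 2) F) + b • v := by
  rfl

lemma lie_id (z : t2 F) : ⁅(t2Id F), z⁆ = 0 := by
  rw [lie_eq, dd_id, oo_id]; simp

lemma lie_id' (z : t2 F) : ⁅z, t2Id F⁆ = 0 := by
  rw [lie_eq, dd_id, oo_id]; simp

lemma lie_zero_of_mem_span {x y z : t2 F}
    (hy : y ∈ Submodule.span F {x, t2Id F}) (hz : z ∈ Submodule.span F {x, t2Id F}) :
    ⁅y, z⁆ = 0 := by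
  obtain ⟨a, b, rfl⟩ := Submodule.mem_span_pair.mp hy
  obtain ⟨c, d, rfl⟩ := Submodule.mem_span_pair.mp hz
  simp [lie_id, lie_id', lie_smul, smul_lie]

/-- span {x, I} as a Lie subalgebra. -/
def S (x : t2 F) : LieSubalgebra F (t2 F) :=
  { Submodule.span F {x, t2Id F} with
    lie_mem' := by
      intro y z hy hz
      have : ⁅y, z⁆ = 0 := lie_zero_of_mem_span hy hz
      rw [this]; exact (Submodule.span F {x, t2Id F}).zero_mem }

lemma mem_S_iff (x u : t2 F) : u ∈ S x ↔ u ∈ Submodule.span F {x, t2Id F} := Iff.rfl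

lemma nilpotent_of_mem_span {x y : t2 F} (hy : y ∈ Submodule.span F {x, t2Id F}) :
    LieRing.IsNilpotent (LieSubalgebra.lieSpan F (t2 F) {x, y}) := by
  have hle : LieSubalgebra.lieSpan F (t2 F) {x, y} ≤ S x := by
    rw [LieSubalgebra.lieSpan_le]
    rintro u (rfl | rfl)
    · exact Submodule.subset_span (Set.mem_insert _ _)
    · exact hy
  haveI : IsLieAbelian (LieSubalgebra.lieSpan F (t2 F) {x, y}) := by
    constructor
    rintro ⟨u, hu⟩ ⟨v, hv⟩
    apply Subtype.ext
    rw [LieSubalgebra.coe_bracket]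
    exact lie_zero_of_mem_span (hle hu) (hle hv)
  infer_instance

end T2Aux

namespace T2Aux
variable {F : Type*} [Field F]

lemma not_nilpotent_aux (N : LieSubalgebra F (t2 F)) (w : t2 F) (hw : w ∈ N)
    (he : (e12 : t2 F) ∈ N) (hd : dd w ≠ 0) :
    ¬ LieRing.IsNilpotent N := by
  intro h
  obtain ⟨n, hn⟩ := LieModule.isNilpotent_toEnd_of_isNilpotent (R := F) (L := N) (M := N)
    ⟨w, hw⟩
  have key : ∀ m : ℕ, ((LieModule.toEnd F N N ⟨w, hw⟩) ^ m) ⟨e12, he⟩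
      = (dd w) ^ m • (⟨e12, he⟩ : N) := by
    intro m
    induction m with
    | zero => simp
    | succ m ih =>
      rw [pow_succ', Module.End.mul_apply, ih, map_smul, LieModule.toEnd_apply_apply]
      have : (⁅(⟨w, hw⟩ : N), (⟨e12, he⟩ : N)⁆ : N) = dd w • ⟨e12, he⟩ := by
        apply Subtype.ext
        rw [LieSubalgebra.coe_bracket]
        show ⁅w, (e12 : t2 F)⁆ = dd w • (e12 : t2 F)
        rw [lie_eq, oo_e12, dd_e12]; ring_nf
      rw [this, smul_smul, pow_succ]
  have := key n
  rw [hn] at this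
  simp only [LinearMap.zero_apply] at this
  have h2 : ((dd w) ^ n • (⟨e12, he⟩ : N) : N) ≠ 0 := by
    intro hc
    have := congrArg (Subtype.val) hc
    simp only [SetLike.val_smul, ZeroMemClass.coe_zero] at this
    exact e12_ne (by
      have := smul_eq_zero.mp this
      rcases this with h | h
      · exact absurd h (pow_ne_zero n hd)
      · exact h) |>.elim
  exact h2 this.symm

lemma mem_span_of_comm {x y : t2 F}
    (hx : ¬ (dd x = 0 ∧ oo x = 0))
    (hcomm : dd x * oo y = dd y * oo x) :
    y ∈ Submodule.span F {x, t2Id F} := by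
  rw [Submodule.mem_span_pair]
  by_cases hb : oo x ≠ 0
  · refine ⟨(y : Matrix (Fin 2) (Fin 2) F) 0 1 / (x : Matrix (Fin 2) (Fin 2) F) 0 1,
      (y : Matrix (Fin 2) (Fin 2) F) 0 0
      - ((y : Matrix (Fin 2) (Fin 2) F) 0 1 / (x : Matrix (Fin 2) (Fin 2) F) 0 1)
        * (x : Matrix (Fin 2) (Fin 2) F) 0 0, ?_⟩
    apply Subtype.ext
    rw [coe_smul_add]
    show _ + _ • (1 : Matrix (Fin 2) (Fin 2) F) = _
    have hc := hcomm
    simp only [dd, oo] at hc hb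
    ext i j
    fin_cases i <;> fin_cases j <;>
      simp [Matrix.one_apply, mem10]
    · field_simp
    · field_simp
      linear_combination -hc * 1
  · push_neg at hb
    have ha : dd x ≠ 0 := fun h => hx ⟨h, hb⟩
    have hoy : oo y = 0 := by
      have := hcomm; rw [hb, mul_zero] at this
      exact (mul_eq_zero.mp this).resolve_left ha
    refine ⟨((y : Matrix (Fin 2) (Fin 2) F) 0 0 - (y : Matrix (Fin 2) (Fin 2) F) 1 1)
        / ((x : Matrix (Fin 2) (Fin 2) F) 0 0 - (x : Matrix (Fin 2) (Fin 2) F) 1 1),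
      (y : Matrix (Fin 2) (Fin 2) F) 1 1
      - (((y : Matrix (Fin 2) (Fin 2) F) 0 0 - (y : Matrix (Fin 2) (Fin 2) F) 1 1)
        / ((x : Matrix (Fin 2) (Fin 2) F) 0 0 - (x : Matrix (Fin 2) (Fin 2) F) 1 1))
        * (x : Matrix (Fin 2) (Fin 2) F) 1 1, ?_⟩
    apply Subtype.ext
    rw [coe_smul_add]
    show _ + _ • (1 : Matrix (Fin 2) (Fin 2) F) = _
    simp only [dd, oo] at hb hoy ha
    ext i j
    fin_cases i <;> fin_cases j <;>
      simp [Matrix.one_apply, mem10, hb, hoy]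
    · field_simp
      ring

end T2Aux

namespace T2Aux
variable {F : Type*} [Field F]

lemma not_scalar_iff {x : t2 F} (hx : ¬ ∃ c : F, (x : Matrix (Fin 2) (Fin 2) F) = c • 1) :
    ¬ (dd x = 0 ∧ oo x = 0) := by
  rintro ⟨hd, ho⟩
  apply hx
  refine ⟨(x : Matrix (Fin 2) (Fin 2) F) 0 0, ?_⟩
  simp only [dd, sub_eq_zero] at hd
  simp only [oo] at ho
  ext i j
  fin_cases i <;> fin_cases j <;> simp [Matrix.one_apply, mem10, ho, ← hd]

lemma nilIn_eq_span {x : t2 F} (hx : ¬ ∃ c : F, (x : Matrix (Fin 2) (Fin 2) F) = c • 1) :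
    nilIn F (t2 F) x = (Submodule.span F {x, t2Id F} : Set (t2 F)) := by
  have hx' := not_scalar_iff hx
  ext y
  constructor
  · intro hy
    by_contra hns
    have hcomm : dd x * oo y ≠ dd y * oo x := by
      intro h
      exact hns (mem_span_of_comm hx' h)
    set N := LieSubalgebra.lieSpan F (t2 F) {x, y} with hN
    have hxN : x ∈ N := LieSubalgebra.subset_lieSpan (Set.mem_insert _ _)
    have hyN : y ∈ N := LieSubalgebra.subset_lieSpan (Set.mem_insert_of_mem _ rfl)
    have hbr : ⁅x, y⁆ ∈ N := N.lie_mem hxN hyN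
    have hc : dd x * oo y - dd y * oo x ≠ 0 := sub_ne_zero.mpr hcomm
    have heN : (e12 : t2 F) ∈ N := by
      have : (dd x * oo y - dd y * oo x)⁻¹ • ⁅x, y⁆ = (e12 : t2 F) := by
        rw [lie_eq, smul_smul, inv_mul_cancel₀ hc, one_smul]
      rw [← this]
      exact N.smul_mem _ hbr
    have : ∃ w, w ∈ N ∧ dd w ≠ 0 := by
      by_cases hdx : dd x = 0
      · refine ⟨y, hyN, ?_⟩
        intro hdy
        exact hc (by rw [hdx, hdy]; ring)
      · exact ⟨x, hxN, hdx⟩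
    obtain ⟨w, hwN, hdw⟩ := this
    exact not_nilpotent_aux N w hwN heN hdw hy
  · intro hy
    exact nilpotent_of_mem_span hy

lemma finrank_span_two {x : t2 F} (hx : ¬ ∃ c : F, (x : Matrix (Fin 2) (Fin 2) F) = c • 1) :
    Module.finrank F (Submodule.span F {x, t2Id F} : Submodule F (t2 F)) = 2 := by
  have li : LinearIndependent F ![x, t2Id F] := by
    rw [LinearIndependent.pair_iff]
    intro s t hst
    have hco : s • (x : Matrix (Fin 2) (Fin 2) F) + t • (1 : Matrix (Fin 2) (Fin 2) F) = 0 := by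
      have h1 := congrArg Subtype.val hst
      rw [coe_smul_add] at h1
      simpa [t2Id] using h1
    by_cases hs : s = 0
    · subst hs
      rw [zero_smul, zero_add] at hco
      refine ⟨rfl, ?_⟩
      have := congrArg (fun M : Matrix (Fin 2) (Fin 2) F => M 0 0) hco
      simpa [Matrix.one_apply] using this
    · exfalso
      apply hx
      refine ⟨-t / s, ?_⟩
      have h2 : s • (x : Matrix (Fin 2) (Fin 2) F) = (-t) • 1 := by
        rw [neg_smul]; exact eq_neg_of_add_eq_zero_left hco
      calc (x : Matrix (Fin 2) (Fin 2) F)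
          = s⁻¹ • (s • (x : Matrix (Fin 2) (Fin 2) F)) := by
            rw [smul_smul, inv_mul_cancel₀ hs, one_smul]
        _ = s⁻¹ • ((-t) • (1 : Matrix (Fin 2) (Fin 2) F)) := by rw [h2]
        _ = (-t / s) • 1 := by rw [smul_smul]; congr 1; field_simp
  have hre : Set.range ![x, t2Id F] = ({x, t2Id F} : Set (t2 F)) := by
    simp [Matrix.range_cons, Matrix.range_cons_empty, Set.singleton_union]
    rw [Set.pair_comm]
  have := finrank_span_eq_card (R := F) li
  rw [hre] at this
  simpa using this

end T2Aux

theorem nilIn_t2_of_not_scalar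
    (F : Type*) [Field F] [Fintype F] (x : (t2 F))
    (hx : ¬ ∃ c : F, (x : Matrix (Fin 2) (Fin 2) F) = c • 1) :
    nilIn F (t2 F) x = (Submodule.span F {x, t2Id F} : Set (t2 F)) ∧
    Module.finrank F (Submodule.span F {x, t2Id F} : Submodule F (t2 F)) = 2 ∧
    ∀ y ∈ nilIn F (t2 F) x, ∀ z ∈ nilIn F (t2 F) x, ⁅y, z⁆ = 0 := by
  refine ⟨T2Aux.nilIn_eq_span hx, T2Aux.finrank_span_two hx, ?_⟩
  intro y hy z hz
  rw [T2Aux.nilIn_eq_span hx] at hy hz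
  exact T2Aux.lie_zero_of_mem_span hy hz
end
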